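/- For nonzero vectors x, y, z ∈ ℂⁿ, the rank-one matrices x z* and y z* are Birkhoff–James orthogonal (in operator norm) if and only if x* y = 0. -/

import Mathlib

open Matrix

/-- The operator (spectral) norm of a complex matrix, induced by the Euclidean norm on `ℂⁿ`. -/
noncomputable def opNorm {n : ℕ} (A : Matrix (Fin n) (Fin n) ℂ) : ℝ :=
  ‖Matrix.toEuclideanCLM (𝕜 := ℂ) (n := Fin n) A‖

/-- Birkhoff–James orthogonality of matrices with respect to the operator norm. -/
def BJ {n : ℕ} (A B : Matrix (Fin n) (Fin n) ℂ) : Prop :=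
  ∀ c : ℂ, opNorm A ≤ opNorm (A + c • B)

open scoped InnerProductSpace ComplexConjugate


lemma hilbertBJ {E : Type*} [NormedAddCommGroup E] [InnerProductSpace ℂ E]
    (a b : E) (hb : b ≠ 0) :
    (∀ c : ℂ, ‖a‖ ≤ ‖a + c • b‖) ↔ (inner ℂ a b : ℂ) = 0 := by
  have hbn : (0:ℝ) < ‖b‖ := norm_pos_iff.mpr hb
  constructor
  · intro h
    by_contra hab
    set t : ℂ := inner ℂ a b with ht
    set c : ℂ := -(conj t / (‖b‖ ^ 2 : ℝ)) with hc
    have hb2 : (0:ℝ) < ‖b‖ ^ 2 := by positivity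
    have h1 : (inner ℂ a (c • b) : ℂ) = -((‖t‖ ^ 2 / ‖b‖ ^ 2 : ℝ) : ℂ) := by
      rw [inner_smul_right, ← ht, hc]
      push_cast
      field_simp
      rw [mul_comm ((starRingEnd ℂ) t) t, Complex.mul_conj, Complex.normSq_eq_norm_sq]
      push_cast
      ring
    have hcn : ‖c‖ = ‖t‖ / ‖b‖ ^ 2 := by
      rw [hc, norm_neg, norm_div, RCLike.norm_conj]
      norm_num
    have key : ‖a + c • b‖ ^ 2 = ‖a‖ ^ 2 - ‖t‖ ^ 2 / ‖b‖ ^ 2 := by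
      rw [@norm_add_sq ℂ, h1, norm_smul, hcn]
      have hre : RCLike.re (-((‖t‖ ^ 2 / ‖b‖ ^ 2 : ℝ) : ℂ)) = -(‖t‖ ^ 2 / ‖b‖ ^ 2) := by
        rw [map_neg]
        exact congrArg Neg.neg (Complex.ofReal_re _)
      rw [hre]
      rw [mul_pow, div_pow]
      field_simp
      ring
    have h2 := h c
    have h3 : ‖a‖ ^ 2 ≤ ‖a + c • b‖ ^ 2 := by
      gcongr
    rw [key] at h3
    have : ‖t‖ ^ 2 / ‖b‖ ^ 2 ≤ 0 := by linarith
    have : ‖t‖ ^ 2 ≤ 0 := by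
      rw [div_nonpos_iff] at this
      rcases this with ⟨h4, h5⟩ | ⟨h4, h5⟩
      · nlinarith
      · exact h4
    have : t = 0 := by
      have := le_antisymm this (by positivity)
      simpa using this
    exact hab this
  · intro h c
    have : ‖a‖ ^ 2 ≤ ‖a + c • b‖ ^ 2 := by
      rw [@norm_add_sq ℂ, inner_smul_right, h, mul_zero]
      simp only [map_zero, mul_zero, add_zero]
      nlinarith [sq_nonneg ‖c • b‖]
    exact le_of_pow_le_pow_left₀ two_ne_zero (norm_nonneg _) this

lemma inner_equiv_symm_aux {n : ℕ} (a b : Fin n → ℂ) :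
    inner ℂ ((WithLp.equiv 2 (Fin n → ℂ)).symm a : EuclideanSpace ℂ (Fin n))
      ((WithLp.equiv 2 (Fin n → ℂ)).symm b) = dotProduct (star a) b :=
  (EuclideanSpace.inner_toLp_toLp a b).trans (dotProduct_comm _ _)

lemma mulVec_vecMulVec_star {n : ℕ} (v z u : Fin n → ℂ) :
    Matrix.vecMulVec v (star z) *ᵥ u = dotProduct (star z) u • v := by
  ext i
  simp [Matrix.mulVec, Matrix.vecMulVec_apply, dotProduct, Finset.sum_mul,
    Finset.mul_sum, mul_comm, mul_assoc, mul_left_comm]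

lemma opNorm_vecMulVec {n : ℕ} (v z : Fin n → ℂ) (hz : z ≠ 0) :
    opNorm (Matrix.vecMulVec v (star z)) =
      ‖((WithLp.equiv 2 (Fin n → ℂ)).symm v : EuclideanSpace ℂ (Fin n))‖ *
        ‖((WithLp.equiv 2 (Fin n → ℂ)).symm z : EuclideanSpace ℂ (Fin n))‖ := by
  set ev : EuclideanSpace ℂ (Fin n) := (WithLp.equiv 2 (Fin n → ℂ)).symm v
  set ez : EuclideanSpace ℂ (Fin n) := (WithLp.equiv 2 (Fin n → ℂ)).symm z
  set T := Matrix.toEuclideanCLM (𝕜 := ℂ) (n := Fin n) (Matrix.vecMulVec v (star z))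
  have hez : ez ≠ 0 := fun h => hz (by simpa [ez] using congrArg (WithLp.equiv 2 (Fin n → ℂ)) h)
  have hezn : (0:ℝ) < ‖ez‖ := norm_pos_iff.mpr hez
  have hT : ∀ u : EuclideanSpace ℂ (Fin n), T u = (inner ℂ ez u : ℂ) • ev := by
    intro u
    have : u = (WithLp.equiv 2 (Fin n → ℂ)).symm (WithLp.equiv 2 (Fin n → ℂ) u) := by simp
    rw [this]
    rw [show T ((WithLp.equiv 2 (Fin n → ℂ)).symm (WithLp.equiv 2 (Fin n → ℂ) u)) =
      (WithLp.equiv 2 (Fin n → ℂ)).symm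
        (Matrix.toLin' (Matrix.vecMulVec v (star z)) (WithLp.equiv 2 (Fin n → ℂ) u)) from rfl]
    rw [Matrix.toLin'_apply, mulVec_vecMulVec_star]
    rw [inner_equiv_symm_aux]
    simp [ev]
  have hTnorm : ∀ u : EuclideanSpace ℂ (Fin n), ‖T u‖ = ‖(inner ℂ ez u : ℂ)‖ * ‖ev‖ := by
    intro u; rw [hT u, norm_smul]
  apply le_antisymm
  · apply ContinuousLinearMap.opNorm_le_bound _ (by positivity)
    intro u
    rw [hTnorm u]
    calc ‖(inner ℂ ez u : ℂ)‖ * ‖ev‖ ≤ ‖ez‖ * ‖u‖ * ‖ev‖ :=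
          mul_le_mul_of_nonneg_right (norm_inner_le_norm (𝕜 := ℂ) ez u) (norm_nonneg ev)
      _ = ‖ev‖ * ‖ez‖ * ‖u‖ := by ring
  · have h1 : ‖T ez‖ ≤ ‖T‖ * ‖ez‖ := T.le_opNorm ez
    rw [hTnorm ez, inner_self_eq_norm_sq_to_K (𝕜 := ℂ) (E := EuclideanSpace ℂ (Fin n))] at h1
    rw [norm_pow, RCLike.norm_ofReal, abs_of_nonneg (norm_nonneg ez)] at h1
    have := (mul_le_mul_iff_of_pos_right hezn).mp (by nlinarith : ‖ev‖ * ‖ez‖ * ‖ez‖ ≤ ‖T‖ * ‖ez‖)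
    exact this

lemma vecMulVec_add_smul {n : ℕ} (x y z : Fin n → ℂ) (c : ℂ) :
    Matrix.vecMulVec x (star z) + c • Matrix.vecMulVec y (star z) =
      Matrix.vecMulVec (x + c • y) (star z) := by
  ext i j
  simp [Matrix.vecMulVec_apply]
  ring

/-- For nonzero `x, y, z`, the rank-one matrices `x z*` and `y z*` are BJ-orthogonal
iff `x* y = 0`. -/
theorem stmt7 {n : ℕ} (x y z : Fin n → ℂ) (hx : x ≠ 0) (hy : y ≠ 0) (hz : z ≠ 0) :
    BJ (Matrix.vecMulVec x (star z)) (Matrix.vecMulVec y (star z)) ↔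
      dotProduct (star x) y = 0 := by
  have hey : ((WithLp.equiv 2 (Fin n → ℂ)).symm y : EuclideanSpace ℂ (Fin n)) ≠ 0 :=
    fun h => hy (by simpa using congrArg (WithLp.equiv 2 (Fin n → ℂ)) h)
  have hezp : (0:ℝ) < ‖((WithLp.equiv 2 (Fin n → ℂ)).symm z : EuclideanSpace ℂ (Fin n))‖ :=
    norm_pos_iff.mpr (fun h => hz (by simpa using congrArg (WithLp.equiv 2 (Fin n → ℂ)) h))
  have hsplit : ∀ c : ℂ,
      ((WithLp.equiv 2 (Fin n → ℂ)).symm (x + c • y) : EuclideanSpace ℂ (Fin n)) =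
        (WithLp.equiv 2 (Fin n → ℂ)).symm x + c • (WithLp.equiv 2 (Fin n → ℂ)).symm y :=
    fun c => rfl
  have hBJ : BJ (Matrix.vecMulVec x (star z)) (Matrix.vecMulVec y (star z)) ↔
      ∀ c : ℂ, ‖((WithLp.equiv 2 (Fin n → ℂ)).symm x : EuclideanSpace ℂ (Fin n))‖ ≤
        ‖((WithLp.equiv 2 (Fin n → ℂ)).symm x : EuclideanSpace ℂ (Fin n)) +
          c • ((WithLp.equiv 2 (Fin n → ℂ)).symm y : EuclideanSpace ℂ (Fin n))‖ := by
    unfold BJ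
    apply forall_congr'
    intro c
    rw [vecMulVec_add_smul, opNorm_vecMulVec x z hz, opNorm_vecMulVec (x + c • y) z hz,
      hsplit c]
    exact mul_le_mul_iff_of_pos_right hezp
  rw [hBJ, hilbertBJ _ _ hey, inner_equiv_symm_aux]
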